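/- Let n ∈ ℕ, 1 < p < ∞ with conjugate exponent p' = p/(p−1), and (n−1)/2 ≤ α ≤ n−1. Let η be a positive locally integrable function on (0,∞), set Δ(t) = ∫_0^t η(s) ds and u(t) = t^{n−1−α}. Then there is a constant C, depending only on n, p, α, such that for every r > 0: ∫_0^r (∫_0^t u(s) ds)^{p'} η(t) Δ(t)^{−p'} dt ≤ C ∫_0^r Δ(x)^{1−p'} x^{p'(n−α)−1} dx. -/

import Mathlib

open MeasureTheory Filter Set
open scoped ENNReal


lemma meas_rpow_const (c : ℝ) : Measurable fun x : ℝ => x ^ c := by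
  have h : (fun x : ℝ => x ^ c) = fun x =>
      if x = 0 then (if c = 0 then 1 else 0)
      else Real.exp (Real.log x * c) * (if x < 0 then Real.cos (c * Real.pi) else 1) := by
    funext x
    rcases lt_trichotomy x 0 with hx | hx | hx
    · rw [if_neg hx.ne, if_pos hx, Real.rpow_def_of_neg hx, mul_comm c]
    · subst hx
      by_cases hc : c = 0 <;> simp [hc, Real.rpow_zero, Real.zero_rpow]
    · rw [if_neg hx.ne', if_neg (not_lt.2 hx.le), mul_one, Real.rpow_def_of_pos hx]
  rw [h]
  exact Measurable.ite (measurableSet_eq) measurable_const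
    (((Real.measurable_log.mul measurable_const).exp).mul
      (Measurable.ite measurableSet_Iio measurable_const measurable_const))



lemma key_inner_bound (G : ℝ → ℝ≥0∞) (hG : Measurable G) (Δ : ℝ → ℝ) (hΔ : Monotone Δ)
    (a b y : ℝ) (hab : a ≤ b) (hΔa : 0 ≤ Δ a)
    (hG' : ∀ u, a ≤ u → u ≤ b → ∫⁻ t in Set.Ioc a u, G t = ENNReal.ofReal (Δ u - Δ a)) :
    ∫⁻ t in Set.Ioc a b ∩ {t | Δ t < y}, G t
      ≤ (Set.Ioi (Δ a)).indicator (fun y => ENNReal.ofReal y) y := by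
  by_cases hy : Δ a < y
  · rw [Set.indicator_of_mem (Set.mem_Ioi.2 hy)]
    set S := Set.Ioc a b ∩ {t | Δ t < y} with hS
    set s := sSup (insert a S) with hs
    have hbdd : BddAbove (insert a S) := by
      refine ⟨b, ?_⟩
      rintro t (rfl | ⟨ht1, _⟩)
      · exact hab
      · exact ht1.2
    have has : a ≤ s := le_csSup hbdd (Set.mem_insert _ _)
    have hsb : s ≤ b := csSup_le (Set.insert_nonempty _ _) (by
      rintro t (rfl | ht)
      · exact hab
      · exact ht.1.2)
    have hSsub : S ⊆ Set.Ioo a s ∪ {s} := by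
      intro t ht
      have hts : t ≤ s := le_csSup hbdd (Set.mem_insert_of_mem _ ht)
      rcases eq_or_lt_of_le hts with h | h
      · exact Or.inr h
      · exact Or.inl ⟨ht.1.1, h⟩
    have hIoo : ∫⁻ t in Set.Ioo a s, G t ≤ ENNReal.ofReal y := by
      rcases eq_or_lt_of_le has with h | h
      · rw [← h]; simp
      · set u : ℕ → ℝ := fun n => s - (s - a) / (n + 1) with hu
        have hsa : 0 < s - a := sub_pos.2 h
        have hu_ge : ∀ n, a ≤ u n := by
          intro n
          have h1 : (s - a) / ((n : ℝ) + 1) ≤ (s - a) := by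
            apply div_le_self hsa.le
            have : (0:ℝ) ≤ (n:ℝ) := Nat.cast_nonneg n
            linarith
          simp only [hu]
          linarith
        have hu_lt : ∀ n, u n < s := by
          intro n
          have : 0 < (s - a) / ((n : ℝ) + 1) := by positivity
          simp only [hu]; linarith
        have hu_mono : Monotone u := by
          intro i j hij
          simp only [hu]
          have : (s - a) / ((j : ℝ) + 1) ≤ (s - a) / ((i : ℝ) + 1) := by
            apply div_le_div_of_nonneg_left hsa.le (by positivity)
            exact_mod_cast by exact_mod_cast add_le_add_left (Nat.cast_le.2 hij) 1
          linarith
        have hcover : Set.Ioo a s = ⋃ n, Set.Ioc a (u n) := by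
          ext t
          simp only [Set.mem_Ioo, Set.mem_iUnion, Set.mem_Ioc]
          constructor
          · rintro ⟨hta, hts⟩
            obtain ⟨n, hn⟩ := exists_nat_gt ((s - a) / (s - t))
            refine ⟨n, hta, ?_⟩
            have hst : 0 < s - t := sub_pos.2 hts
            have h1 : (s - a) / ((n : ℝ) + 1) < s - t := by
              rw [div_lt_iff₀ (by positivity)]
              have h2 : (s - a) / (s - t) < (n : ℝ) + 1 := hn.trans (by linarith)
              calc s - a = ((s - a) / (s - t)) * (s - t) := by field_simp
                _ < ((n : ℝ) + 1) * (s - t) := by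
                    exact mul_lt_mul_of_pos_right h2 hst
                _ = (s - t) * ((n : ℝ) + 1) := mul_comm _ _
            simp only [hu]; linarith
          · rintro ⟨n, hta, htn⟩
            exact ⟨hta, lt_of_le_of_lt htn (hu_lt n)⟩
        have hwd : ∀ A : Set ℝ, MeasurableSet A →
            ∫⁻ t in A, G t = (volume.withDensity G) A := by
          intro A hA
          rw [withDensity_apply G hA]
        rw [hcover, hwd _ (MeasurableSet.iUnion fun n => measurableSet_Ioc)]
        have hdir : Directed (· ⊆ ·) (fun n => Set.Ioc a (u n)) := by
          apply Monotone.directed_le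
          intro i j hij
          exact Set.Ioc_subset_Ioc_right (hu_mono hij)
        rw [hdir.measure_iUnion]
        apply iSup_le
        intro n
        rw [← hwd _ measurableSet_Ioc,
          hG' (u n) (hu_ge n) ((hu_lt n).le.trans hsb)]
        apply ENNReal.ofReal_le_ofReal
        obtain ⟨t, htm, htgt⟩ := exists_lt_of_lt_csSup (Set.insert_nonempty _ _)
          (show u n < sSup (insert a S) from hu_lt n)
        rcases htm with rfl | htm
        · exact absurd htgt (not_lt.2 (hu_ge n))
        · have : Δ (u n) ≤ Δ t := hΔ htgt.le
          have h2 : Δ t < y := htm.2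
          linarith
    calc ∫⁻ t in S, G t ≤ ∫⁻ t in Set.Ioo a s ∪ {s}, G t := lintegral_mono_set hSsub
      _ ≤ (∫⁻ t in Set.Ioo a s, G t) + ∫⁻ t in {s}, G t := lintegral_union_le _ _ _
      _ = ∫⁻ t in Set.Ioo a s, G t := by
          rw [Measure.restrict_eq_zero.2 (measure_singleton s), lintegral_zero_measure, add_zero]
      _ ≤ ENNReal.ofReal y := hIoo
  · have hempty : Set.Ioc a b ∩ {t | Δ t < y} = ∅ := by
      ext t
      simp only [Set.mem_inter_iff, Set.mem_Ioc, Set.mem_setOf_eq, Set.mem_empty_iff_false,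
        iff_false, not_and, and_imp]
      intro hta _
      exact not_lt.2 ((not_lt.1 hy).trans (hΔ hta.le))
    rw [hempty]
    simp



lemma keyK (q : ℝ) (hq : 1 < q) (G : ℝ → ℝ≥0∞) (hG : Measurable G) (Δ : ℝ → ℝ)
    (hΔ : Monotone Δ) (a b : ℝ) (hab : a ≤ b) (hΔa : 0 < Δ a)
    (hG' : ∀ u, a ≤ u → u ≤ b → ∫⁻ t in Set.Ioc a u, G t = ENNReal.ofReal (Δ u - Δ a)) :
    ∫⁻ t in Set.Ioc a b, G t * ENNReal.ofReal ((Δ t) ^ (-q)) ≤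
      ENNReal.ofReal (q / (q - 1) * (Δ a) ^ (1 - q)) := by
  have hq0 : (0 : ℝ) < q := lt_trans one_pos hq
  have hΔmeas : Measurable Δ := hΔ.measurable
  -- the two-variable kernel
  set F : ℝ × ℝ → ℝ≥0∞ := fun p =>
    ({p' : ℝ × ℝ | Δ p'.1 < p'.2}).indicator
      (fun p' => G p'.1 * ENNReal.ofReal (q * p'.2 ^ (-q - 1))) p with hF
  have hFmeas : Measurable F := by
    apply Measurable.indicator
    · exact (hG.comp measurable_fst).mul
        ((measurable_const.mul ((meas_rpow_const (-q-1)).comp measurable_snd)).ennreal_ofReal)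
    · exact measurableSet_lt (hΔmeas.comp measurable_fst) measurable_snd
  -- Step K1 : pointwise identity on Ioc a b
  have hK1 : ∀ t ∈ Set.Ioc a b,
      G t * ENNReal.ofReal ((Δ t) ^ (-q)) = ∫⁻ y in Set.Ioi (0:ℝ), F (t, y) := by
    intro t ht
    have hΔt : 0 < Δ t := lt_of_lt_of_le hΔa (hΔ ht.1.le)
    have h1 : (fun y => F (t, y)) =
        (Set.Ioi (Δ t)).indicator (fun y => G t * ENNReal.ofReal (q * y ^ (-q - 1))) := by
      funext y
      simp only [hF, Set.indicator_apply, Set.mem_setOf_eq, Set.mem_Ioi]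
    rw [h1, lintegral_indicator measurableSet_Ioi, Measure.restrict_restrict measurableSet_Ioi,
      Set.Ioi_inter_Ioi, max_eq_left hΔt.le]
    rw [lintegral_const_mul'' _ (f := fun y => ENNReal.ofReal (q * y ^ (-q - 1))) ((measurable_const.mul
      (meas_rpow_const (-q-1))).ennreal_ofReal).aemeasurable]
    congr 1
    have hint : IntegrableOn (fun y : ℝ => q * y ^ (-q - 1)) (Set.Ioi (Δ t)) :=
      (integrableOn_Ioi_rpow_of_lt (by linarith) hΔt).const_mul q
    have hnn : 0 ≤ᵐ[volume.restrict (Set.Ioi (Δ t))] fun y : ℝ => q * y ^ (-q - 1) := by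
      filter_upwards [ae_restrict_mem measurableSet_Ioi] with y hy
      have : (0:ℝ) < y := lt_trans hΔt hy
      positivity
    rw [← ofReal_integral_eq_lintegral_ofReal hint hnn]
    congr 1
    rw [MeasureTheory.integral_const_mul, integral_Ioi_rpow_of_lt (by linarith) hΔt]
    have he : -q - 1 + 1 = -q := by ring
    rw [he]
    field_simp
  have huncurry : Function.uncurry (fun t y => F (t, y)) = F := by
    funext p; simp [Function.uncurry]
  have hswap : ∫⁻ t in Set.Ioc a b, ∫⁻ y in Set.Ioi (0:ℝ), F (t, y)
      = ∫⁻ y in Set.Ioi (0:ℝ), ∫⁻ t in Set.Ioc a b, F (t, y) :=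
    lintegral_lintegral_swap (by rw [huncurry]; exact hFmeas.aemeasurable)
  have hK2 : ∀ y : ℝ, ∫⁻ t in Set.Ioc a b, F (t, y)
      = ENNReal.ofReal (q * y ^ (-q - 1)) * ∫⁻ t in Set.Ioc a b ∩ {t | Δ t < y}, G t := by
    intro y
    have h1 : (fun t => F (t, y)) =
        ({t : ℝ | Δ t < y}).indicator (fun t => G t * ENNReal.ofReal (q * y ^ (-q - 1))) := by
      funext t
      simp only [hF, Set.indicator_apply, Set.mem_setOf_eq]
    rw [h1, lintegral_indicator (measurableSet_lt hΔmeas measurable_const),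
      Measure.restrict_restrict (measurableSet_lt hΔmeas measurable_const),
      Set.inter_comm, lintegral_mul_const _ hG, mul_comm]
  calc ∫⁻ t in Set.Ioc a b, G t * ENNReal.ofReal ((Δ t) ^ (-q))
      = ∫⁻ t in Set.Ioc a b, ∫⁻ y in Set.Ioi (0:ℝ), F (t, y) :=
        setLIntegral_congr_fun measurableSet_Ioc hK1
    _ = ∫⁻ y in Set.Ioi (0:ℝ), ∫⁻ t in Set.Ioc a b, F (t, y) := hswap
    _ ≤ ∫⁻ y in Set.Ioi (0:ℝ), ENNReal.ofReal (q * y ^ (-q - 1)) *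
          (Set.Ioi (Δ a)).indicator (fun y => ENNReal.ofReal y) y := by
        apply lintegral_mono
        intro y
        dsimp only
        rw [hK2 y]
        exact mul_le_mul_right (key_inner_bound G hG Δ hΔ a b y hab hΔa.le hG') _
    _ = ∫⁻ y in Set.Ioi (0:ℝ), (Set.Ioi (Δ a)).indicator
          (fun y => ENNReal.ofReal (q * y ^ (-q - 1)) * ENNReal.ofReal y) y := by
        congr 1
        funext y
        by_cases hy : y ∈ Set.Ioi (Δ a)
        · rw [Set.indicator_of_mem hy, Set.indicator_of_mem hy]
        · rw [Set.indicator_of_notMem hy, Set.indicator_of_notMem hy, mul_zero]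
    _ = ∫⁻ y in Set.Ioi (Δ a), ENNReal.ofReal (q * y ^ (-q - 1)) * ENNReal.ofReal y := by
        rw [lintegral_indicator measurableSet_Ioi,
          Measure.restrict_restrict measurableSet_Ioi, Set.Ioi_inter_Ioi,
          max_eq_left hΔa.le]
    _ = ∫⁻ y in Set.Ioi (Δ a), ENNReal.ofReal (q * y ^ (-q)) := by
        apply setLIntegral_congr_fun measurableSet_Ioi
        intro y hy
        beta_reduce
        have hy0 : (0:ℝ) < y := lt_trans hΔa hy
        rw [← ENNReal.ofReal_mul (by positivity), mul_assoc,
          ← Real.rpow_add_one (ne_of_gt hy0)]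
        ring_nf
    _ = ENNReal.ofReal (∫ y in Set.Ioi (Δ a), q * y ^ (-q)) := by
        have hint : IntegrableOn (fun y : ℝ => q * y ^ (-q)) (Set.Ioi (Δ a)) :=
          (integrableOn_Ioi_rpow_of_lt (by linarith) hΔa).const_mul q
        have hnn : 0 ≤ᵐ[volume.restrict (Set.Ioi (Δ a))] fun y : ℝ => q * y ^ (-q) := by
          filter_upwards [ae_restrict_mem measurableSet_Ioi] with y hy
          have : (0:ℝ) < y := lt_trans hΔa hy
          positivity
        rw [← ofReal_integral_eq_lintegral_ofReal hint hnn]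
    _ = ENNReal.ofReal (q / (q - 1) * (Δ a) ^ (1 - q)) := by
        congr 1
        rw [MeasureTheory.integral_const_mul, integral_Ioi_rpow_of_lt (by linarith) hΔa]
        have he : -q + 1 = 1 - q := by ring
        rw [he]
        have hq1 : q - 1 ≠ 0 := by linarith
        have h1q : 1 - q ≠ 0 := by linarith
        field_simp
        ring



theorem stmt13 (n : ℕ) (hn : 0 < n) (p : ℝ) (hp : 1 < p)
    (α : ℝ) (hα1 : ((n : ℝ) - 1) / 2 ≤ α) (hα2 : α ≤ (n : ℝ) - 1) :
    ∃ C : ℝ, 0 < C ∧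
      ∀ η : ℝ → ℝ, (∀ t : ℝ, 0 < t → 0 < η t) →
        (∀ t : ℝ, 0 < t → IntegrableOn η (Set.Ioc 0 t)) →
        ∀ r : ℝ, 0 < r →
          (∫⁻ t in Set.Ioc (0 : ℝ) r,
              ENNReal.ofReal
                ((∫ s in Set.Ioc (0 : ℝ) t, s ^ ((n : ℝ) - 1 - α)) ^ (p / (p - 1)) *
                  η t *
                  (∫ s in Set.Ioc (0 : ℝ) t, η s) ^ (-(p / (p - 1))))) ≤
            ENNReal.ofReal C *
              ∫⁻ x in Set.Ioc (0 : ℝ) r,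
                ENNReal.ofReal
                  ((∫ s in Set.Ioc (0 : ℝ) x, η s) ^ (1 - p / (p - 1)) *
                    x ^ ((p / (p - 1)) * ((n : ℝ) - α) - 1)) := by
  have hp1 : (0:ℝ) < p - 1 := by linarith
  set q : ℝ := p / (p - 1) with hqdef
  have hq1 : 1 < q := by
    rw [hqdef, lt_div_iff₀ hp1]; linarith
  have hq0 : (0:ℝ) < q := lt_trans one_pos hq1
  set m : ℝ := (n : ℝ) - α with hmdef
  have hm1 : (1:ℝ) ≤ m := by rw [hmdef]; linarith
  have hm0 : (0:ℝ) < m := lt_of_lt_of_le one_pos hm1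
  set β : ℝ := q * m with hβdef
  have hβ1 : (1:ℝ) < β := by nlinarith
  have hβ0 : (0:ℝ) < β := lt_trans one_pos hβ1
  refine ⟨m ^ (-q) * β * (q / (q - 1)), by
    apply mul_pos (mul_pos (Real.rpow_pos_of_pos hm0 _) hβ0) (div_pos hq0 (by linarith)), ?_⟩
  intro η hpos hint r hr
  -- the primitive of η
  set Δ : ℝ → ℝ := fun x => ∫ s in Set.Ioc (0:ℝ) x, η s with hΔdef
  have hΔ0 : ∀ x : ℝ, x ≤ 0 → Δ x = 0 := by
    intro x hx
    simp only [hΔdef]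
    rw [Set.Ioc_eq_empty (by simp only [not_lt]; exact hx)]
    simp
  have hΔnn : ∀ x : ℝ, 0 ≤ Δ x := by
    intro x
    rcases le_or_gt x 0 with hx | hx
    · rw [hΔ0 x hx]
    · exact setIntegral_nonneg measurableSet_Ioc fun s hs => (hpos s hs.1).le
  have hadd : ∀ x u : ℝ, 0 < x → x ≤ u → Δ u = Δ x + ∫ s in Set.Ioc x u, η s := by
    intro x u hx hxu
    simp only [hΔdef]
    rw [← Set.Ioc_union_Ioc_eq_Ioc hx.le hxu,
      setIntegral_union (Set.Ioc_disjoint_Ioc_of_le le_rfl) measurableSet_Ioc (hint x hx)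
        ((hint u (lt_of_lt_of_le hx hxu)).mono_set (Set.Ioc_subset_Ioc_left hx.le))]
  have hΔmono : Monotone Δ := by
    intro x1 x2 h
    rcases le_or_gt x1 0 with hx | hx
    · rw [hΔ0 x1 hx]; exact hΔnn x2
    · rw [hadd x1 x2 hx h]
      have h2 : 0 ≤ ∫ s in Set.Ioc x1 x2, η s :=
        setIntegral_nonneg measurableSet_Ioc fun s hs => (hpos s (lt_trans hx hs.1)).le
      linarith
  have hΔpos : ∀ x : ℝ, 0 < x → 0 < Δ x := by
    intro x hx
    simp only [hΔdef]
    rw [setIntegral_pos_iff_support_of_nonneg_ae ?_ (hint x hx)]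
    · refine lt_of_lt_of_le ?_ (measure_mono (fun s hs =>
        ⟨ne_of_gt (hpos s hs.1), hs⟩ : Set.Ioc (0:ℝ) x ⊆ Function.support η ∩ Set.Ioc 0 x))
      rw [Real.volume_Ioc]
      simp [hx]
    · filter_upwards [ae_restrict_mem measurableSet_Ioc] with s hs
      exact (hpos s hs.1).le
  -- measurable representative of η on Ioc 0 r
  obtain ⟨g, hgmeas, hgeq⟩ : AEMeasurable η (volume.restrict (Set.Ioc (0:ℝ) r)) :=
    (hint r hr).aemeasurable
  set G : ℝ → ℝ≥0∞ := fun t => ENNReal.ofReal (g t) with hGdef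
  have hGmeas : Measurable G := hgmeas.ennreal_ofReal
  have hGint : ∀ x u : ℝ, 0 < x → x ≤ u → u ≤ r →
      ∫⁻ t in Set.Ioc x u, G t = ENNReal.ofReal (Δ u - Δ x) := by
    intro x u hx hxu hur
    have hsub : Set.Ioc x u ⊆ Set.Ioc (0:ℝ) r :=
      fun t ht => ⟨lt_trans hx ht.1, ht.2.trans hur⟩
    have hgeq' : ∀ᵐ t ∂(volume.restrict (Set.Ioc x u)), η t = g t :=
      ae_restrict_of_ae_restrict_of_subset hsub hgeq
    have h1 : ∫⁻ t in Set.Ioc x u, G t = ∫⁻ t in Set.Ioc x u, ENNReal.ofReal (η t) := by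
      apply lintegral_congr_ae
      filter_upwards [hgeq'] with t ht
      simp only [hGdef, ht]
    have hintxu : IntegrableOn η (Set.Ioc x u) :=
      (hint u (lt_of_lt_of_le hx hxu)).mono_set (Set.Ioc_subset_Ioc_left hx.le)
    have hnnxu : 0 ≤ᵐ[volume.restrict (Set.Ioc x u)] η := by
      filter_upwards [ae_restrict_mem measurableSet_Ioc] with t ht
      exact (hpos t (lt_trans hx ht.1)).le
    rw [h1, ← ofReal_integral_eq_lintegral_ofReal hintxu hnnxu]
    congr 1
    have := hadd x u hx hxu
    linarith
  -- the two-variable kernel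
  set Φ : ℝ × ℝ → ℝ≥0∞ := fun pp =>
    ({p' : ℝ × ℝ | 0 < p'.2 ∧ p'.2 ≤ p'.1}).indicator
        (fun p' => ENNReal.ofReal (p'.2 ^ (β - 1))) pp
      * (G pp.1 * ENNReal.ofReal ((Δ pp.1) ^ (-q))) with hΦdef
  have hsetmeas : MeasurableSet {p' : ℝ × ℝ | 0 < p'.2 ∧ p'.2 ≤ p'.1} := by
    rw [Set.setOf_and]
    exact (measurableSet_lt measurable_const measurable_snd).inter
      (measurableSet_le measurable_snd measurable_fst)
  have hΦmeas : Measurable Φ := by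
    apply Measurable.mul
    · exact Measurable.indicator
        (((meas_rpow_const (β - 1)).comp measurable_snd).ennreal_ofReal) hsetmeas
    · exact (hGmeas.comp measurable_fst).mul
        (((meas_rpow_const (-q)).comp (hΔmono.measurable.comp measurable_fst)).ennreal_ofReal)
  -- claim A
  have claimA : ∀ t ∈ Set.Ioc (0:ℝ) r, ∫⁻ x in Set.Ioc (0:ℝ) r, Φ (t, x)
      = (∫⁻ x in Set.Ioc (0:ℝ) t, ENNReal.ofReal (x ^ (β - 1)))
        * (G t * ENNReal.ofReal ((Δ t) ^ (-q))) := by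
    intro t ht
    have h1 : (fun x => Φ (t, x)) = fun x =>
        (Set.Ioc (0:ℝ) t).indicator (fun x => ENNReal.ofReal (x ^ (β - 1))) x
          * (G t * ENNReal.ofReal ((Δ t) ^ (-q))) := by
      funext x
      simp only [hΦdef, Set.indicator_apply, Set.mem_setOf_eq, Set.mem_Ioc]
    rw [h1, lintegral_mul_const _ (Measurable.indicator
        ((meas_rpow_const (β - 1)).ennreal_ofReal) measurableSet_Ioc),
      lintegral_indicator measurableSet_Ioc, Measure.restrict_restrict measurableSet_Ioc,
      Set.Ioc_inter_Ioc, max_self, min_eq_left ht.2]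
  -- claim B
  have claimB : ∀ x ∈ Set.Ioc (0:ℝ) r, ∫⁻ t in Set.Ioc (0:ℝ) r, Φ (t, x)
      = ENNReal.ofReal (x ^ (β - 1))
        * ∫⁻ t in Set.Ioc x r, G t * ENNReal.ofReal ((Δ t) ^ (-q)) := by
    intro x hx
    have h1 : (fun t => Φ (t, x)) = fun t =>
        (Set.Ici x).indicator (fun t => ENNReal.ofReal (x ^ (β - 1))
          * (G t * ENNReal.ofReal ((Δ t) ^ (-q)))) t := by
      funext t
      by_cases h : x ≤ t <;>
        simp [hΦdef, Set.indicator_apply, Set.mem_setOf_eq, Set.mem_Ici, h, hx.1]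
    have hset : Set.Ici x ∩ Set.Ioc (0:ℝ) r = Set.Icc x r := by
      ext t
      simp only [Set.mem_inter_iff, Set.mem_Ici, Set.mem_Ioc, Set.mem_Icc]
      constructor
      · rintro ⟨h1, _, h3⟩; exact ⟨h1, h3⟩
      · rintro ⟨h1, h3⟩; exact ⟨h1, lt_of_lt_of_le hx.1 h1, h3⟩
    rw [h1, lintegral_indicator measurableSet_Ici, Measure.restrict_restrict measurableSet_Ici,
      hset, ← Measure.restrict_congr_set Ioc_ae_eq_Icc,
      lintegral_const_mul' _ _ ENNReal.ofReal_ne_top]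
  -- main pointwise identity
  have hmain : ∀ᵐ t ∂(volume.restrict (Set.Ioc (0:ℝ) r)),
      ENNReal.ofReal ((∫ s in Set.Ioc (0:ℝ) t, s ^ ((n:ℝ) - 1 - α)) ^ q * η t
          * (∫ s in Set.Ioc (0:ℝ) t, η s) ^ (-q))
        = (ENNReal.ofReal (m ^ (-q)) * ENNReal.ofReal β)
            * ∫⁻ x in Set.Ioc (0:ℝ) r, Φ (t, x) := by
    filter_upwards [hgeq, ae_restrict_mem measurableSet_Ioc] with t htg ht
    have ht0 : (0:ℝ) < t := ht.1
    have hI : ∫ s in Set.Ioc (0:ℝ) t, s ^ ((n:ℝ) - 1 - α) = t ^ m / m := by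
      rw [← intervalIntegral.integral_of_le ht0.le,
        integral_rpow (Or.inl (by linarith : (-1:ℝ) < (n:ℝ) - 1 - α)),
        show (n:ℝ) - 1 - α + 1 = m by rw [hmdef]; ring,
        Real.zero_rpow (ne_of_gt hm0), sub_zero]
    have hΔteq : (∫ s in Set.Ioc (0:ℝ) t, η s) = Δ t := by simp only [hΔdef]
    rw [hI, hΔteq]
    have hA : (t ^ m / m) ^ q = m ^ (-q) * t ^ β := by
      rw [Real.div_rpow (Real.rpow_nonneg ht0.le m) hm0.le, ← Real.rpow_mul ht0.le,
        show m * q = β by rw [hβdef]; ring, Real.rpow_neg hm0.le, div_eq_mul_inv, mul_comm]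
    rw [hA]
    have hxint : ∫⁻ x in Set.Ioc (0:ℝ) t, ENNReal.ofReal (x ^ (β - 1))
        = ENNReal.ofReal (t ^ β / β) := by
      have hint2 : IntegrableOn (fun x : ℝ => x ^ (β - 1)) (Set.Ioc 0 t) :=
        (intervalIntegral.intervalIntegrable_rpow' (by linarith)).1
      rw [← ofReal_integral_eq_lintegral_ofReal hint2 ?_]
      · congr 1
        rw [← intervalIntegral.integral_of_le ht0.le,
          integral_rpow (Or.inl (by linarith : (-1:ℝ) < β - 1)),
          show β - 1 + 1 = β by ring, Real.zero_rpow (ne_of_gt hβ0), sub_zero]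
      · filter_upwards [ae_restrict_mem measurableSet_Ioc] with x hx
        exact Real.rpow_nonneg hx.1.le _
    have hηnn : 0 ≤ η t := (hpos t ht0).le
    have hGt : ENNReal.ofReal (η t) = G t := by simp only [hGdef, htg]
    calc ENNReal.ofReal (m ^ (-q) * t ^ β * η t * Δ t ^ (-q))
        = ENNReal.ofReal (m ^ (-q)) * ENNReal.ofReal (t ^ β) * ENNReal.ofReal (η t)
            * ENNReal.ofReal (Δ t ^ (-q)) := by
          rw [ENNReal.ofReal_mul (by positivity), ENNReal.ofReal_mul (by positivity),
            ENNReal.ofReal_mul (by positivity)]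
      _ = (ENNReal.ofReal (m ^ (-q)) * ENNReal.ofReal β)
            * ∫⁻ x in Set.Ioc (0:ℝ) r, Φ (t, x) := by
          rw [claimA t ht, hxint, hGt]
          have hβt : ENNReal.ofReal (t ^ β)
              = ENNReal.ofReal β * ENNReal.ofReal (t ^ β / β) := by
            rw [← ENNReal.ofReal_mul hβ0.le]
            congr 1
            field_simp
          rw [hβt]
          ring
  calc ∫⁻ t in Set.Ioc (0:ℝ) r,
        ENNReal.ofReal ((∫ s in Set.Ioc (0:ℝ) t, s ^ ((n:ℝ) - 1 - α)) ^ q * η t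
          * (∫ s in Set.Ioc (0:ℝ) t, η s) ^ (-q))
      = (ENNReal.ofReal (m ^ (-q)) * ENNReal.ofReal β)
          * ∫⁻ t in Set.Ioc (0:ℝ) r, ∫⁻ x in Set.Ioc (0:ℝ) r, Φ (t, x) := by
        rw [lintegral_congr_ae hmain]
        exact lintegral_const_mul' _ _
          (ENNReal.mul_ne_top ENNReal.ofReal_ne_top ENNReal.ofReal_ne_top)
    _ = (ENNReal.ofReal (m ^ (-q)) * ENNReal.ofReal β)
          * ∫⁻ x in Set.Ioc (0:ℝ) r, ∫⁻ t in Set.Ioc (0:ℝ) r, Φ (t, x) := by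
        congr 1
        have huncurry : Function.uncurry (fun t x => Φ (t, x)) = Φ := by
          funext pp; simp [Function.uncurry]
        exact lintegral_lintegral_swap (by rw [huncurry]; exact hΦmeas.aemeasurable)
    _ ≤ (ENNReal.ofReal (m ^ (-q)) * ENNReal.ofReal β)
          * ∫⁻ x in Set.Ioc (0:ℝ) r, ENNReal.ofReal (q / (q - 1))
              * ENNReal.ofReal ((Δ x) ^ (1 - q) * x ^ (β - 1)) := by
        apply mul_le_mul_right
        apply lintegral_mono_ae
        filter_upwards [ae_restrict_mem measurableSet_Ioc] with x hx
        rw [claimB x hx]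
        calc ENNReal.ofReal (x ^ (β - 1))
              * ∫⁻ t in Set.Ioc x r, G t * ENNReal.ofReal ((Δ t) ^ (-q))
            ≤ ENNReal.ofReal (x ^ (β - 1))
              * ENNReal.ofReal (q / (q - 1) * (Δ x) ^ (1 - q)) :=
              mul_le_mul_right (keyK q hq1 G hGmeas Δ hΔmono x r hx.2 (hΔpos x hx.1)
                (fun u hu1 hu2 => hGint x u hx.1 hu1 hu2)) _
          _ = ENNReal.ofReal (q / (q - 1))
              * ENNReal.ofReal ((Δ x) ^ (1 - q) * x ^ (β - 1)) := by
              rw [← ENNReal.ofReal_mul (Real.rpow_nonneg hx.1.le _),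
                ← ENNReal.ofReal_mul (div_nonneg hq0.le (by linarith))]
              congr 1
              ring
    _ = ENNReal.ofReal (m ^ (-q) * β * (q / (q - 1)))
          * ∫⁻ x in Set.Ioc (0:ℝ) r,
              ENNReal.ofReal ((∫ s in Set.Ioc (0:ℝ) x, η s) ^ (1 - q) * x ^ (β - 1)) := by
        rw [lintegral_const_mul' _ _ ENNReal.ofReal_ne_top]
        have h1 : ∀ x : ℝ, Δ x = ∫ s in Set.Ioc (0:ℝ) x, η s := fun x => by
          simp only [hΔdef]
        simp only [h1]
        rw [ENNReal.ofReal_mul (by positivity : (0:ℝ) ≤ m ^ (-q) * β),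
          ENNReal.ofReal_mul (Real.rpow_nonneg hm0.le (-q))]
        ring
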